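/- For the Mallows measure on S_n with parameter q given by P_q(σ) = q^{inv(σ)} / [n]_q!, where inv(σ) is the number of inversions and [n]_q! = Π_{i=1}^n (1 + q + ... + q^{i-1}), the probability that σ has descent set exactly {s_1 < ... < s_k} equals det(1/[s_{j+1}-s_i]_q!)_{i,j=0}^k with s_0 = 0, s_{k+1} = n and 1/[m]_q! = 0 for m < 0. -/

import Mathlib

/-- The `q`-integer `[m]_q = 1 + q + ⋯ + q^{m-1}`. -/
def qint (q : ℝ) (m : ℕ) : ℝ := ∑ i ∈ Finset.range m, q ^ i

/-- The `q`-factorial `[m]_q! = ∏_{i=1}^m [i]_q`. -/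
def qfact (q : ℝ) (m : ℕ) : ℝ := ∏ i ∈ Finset.Icc 1 m, qint q i

/-- The number of inversions of a permutation. -/
def inversions {n : ℕ} (σ : Equiv.Perm (Fin n)) : ℕ :=
  (Finset.univ.filter (fun p : Fin n × Fin n => p.1 < p.2 ∧ σ p.2 < σ p.1)).card

open Finset Equiv

def cross {n : ℕ} (A : Finset (Fin n)) : ℕ :=
  ∑ x ∈ A, ∑ y ∈ Aᶜ, if y < x then 1 else 0

variable {m r : ℕ}

lemma card_compl_eq (A : Finset (Fin (m + r))) (hA : A.card = m) : Aᶜ.card = r := by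
  simp [Finset.card_compl, hA]

noncomputable def buildFun (A : Finset (Fin (m + r))) (hA : A.card = m)
    (τ : Perm (Fin m)) (ρ : Perm (Fin r)) : Fin (m + r) → Fin (m + r) :=
  Fin.addCases (fun i => A.orderEmbOfFin hA (τ i))
    (fun j => Aᶜ.orderEmbOfFin (card_compl_eq A hA) (ρ j))

lemma buildFun_bij (A : Finset (Fin (m + r))) (hA : A.card = m)
    (τ : Perm (Fin m)) (ρ : Perm (Fin r)) : Function.Bijective (buildFun A hA τ ρ) := by
  rw [← Finite.injective_iff_bijective]
  intro x y hxy
  induction x using Fin.addCases with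
  | left i => induction y using Fin.addCases with
    | left i' =>
        simp only [buildFun, Fin.addCases_left] at hxy
        have := (A.orderEmbOfFin hA).injective hxy
        rw [τ.injective this]
    | right j' =>
        simp only [buildFun, Fin.addCases_left, Fin.addCases_right] at hxy
        exfalso
        have h1 := A.orderEmbOfFin_mem hA (τ i)
        have h2 := Aᶜ.orderEmbOfFin_mem (card_compl_eq A hA) (ρ j')
        rw [hxy] at h1
        exact (Finset.mem_compl.mp h2) h1
  | right j => induction y using Fin.addCases with
    | left i' =>
        simp only [buildFun, Fin.addCases_left, Fin.addCases_right] at hxy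
        exfalso
        have h1 := A.orderEmbOfFin_mem hA (τ i')
        have h2 := Aᶜ.orderEmbOfFin_mem (card_compl_eq A hA) (ρ j)
        rw [hxy] at h2
        exact (Finset.mem_compl.mp h2) h1
    | right j' =>
        simp only [buildFun, Fin.addCases_right] at hxy
        have := (Aᶜ.orderEmbOfFin (card_compl_eq A hA)).injective hxy
        rw [ρ.injective this]

noncomputable def buildPerm (A : Finset (Fin (m + r)))
    (τ : Perm (Fin m)) (ρ : Perm (Fin r)) : Perm (Fin (m + r)) :=
  if hA : A.card = m then Equiv.ofBijective _ (buildFun_bij A hA τ ρ) else 1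

lemma buildPerm_left (A : Finset (Fin (m + r))) (hA : A.card = m)
    (τ : Perm (Fin m)) (ρ : Perm (Fin r)) (i : Fin m) :
    buildPerm A τ ρ (Fin.castAdd r i) = A.orderEmbOfFin hA (τ i) := by
  simp only [buildPerm, dif_pos hA, Equiv.ofBijective_apply, buildFun, Fin.addCases_left]

lemma buildPerm_right (A : Finset (Fin (m + r))) (hA : A.card = m)
    (τ : Perm (Fin m)) (ρ : Perm (Fin r)) (j : Fin r) :
    buildPerm A τ ρ (Fin.natAdd m j) = Aᶜ.orderEmbOfFin (card_compl_eq A hA) (ρ j) := by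
  simp only [buildPerm, dif_pos hA, Equiv.ofBijective_apply, buildFun, Fin.addCases_right]

lemma castAdd_inj (i i' : Fin m) (h : Fin.castAdd r i = Fin.castAdd r i') : i = i' := by
  have := congrArg Fin.val h
  exact Fin.ext (by simpa using this)

lemma natAdd_inj (j j' : Fin r) (h : Fin.natAdd m j = Fin.natAdd m j') : j = j' := by
  have := congrArg Fin.val h
  exact Fin.ext (by simpa using this)

def Aof (σ : Perm (Fin (m + r))) : Finset (Fin (m + r)) :=
  Finset.univ.image (fun i : Fin m => σ (Fin.castAdd r i))

lemma card_Aof (σ : Perm (Fin (m + r))) : (Aof σ).card = m := by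
  rw [Aof, Finset.card_image_of_injective _
    (fun i i' h => castAdd_inj i i' (σ.injective h))]
  simp

lemma mem_Aof (σ : Perm (Fin (m + r))) (i : Fin m) : σ (Fin.castAdd r i) ∈ Aof σ :=
  Finset.mem_image_of_mem _ (Finset.mem_univ i)

lemma mem_Aof_compl (σ : Perm (Fin (m + r))) (j : Fin r) :
    σ (Fin.natAdd m j) ∈ (Aof σ)ᶜ := by
  rw [Finset.mem_compl, Aof, Finset.mem_image]
  rintro ⟨i, -, h⟩
  have := congrArg Fin.val (σ.injective h)
  simp at this
  omega

noncomputable def stdL (σ : Perm (Fin (m + r))) : Perm (Fin m) :=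
  Equiv.ofBijective
    (fun i => ((Aof σ).orderIsoOfFin (card_Aof σ)).symm ⟨σ (Fin.castAdd r i), mem_Aof σ i⟩)
    (Finite.injective_iff_bijective.mp (by
      intro i i' h
      have := congrArg (fun x => (((Aof σ).orderIsoOfFin (card_Aof σ)) x : Fin (m + r))) h
      simp only [OrderIso.apply_symm_apply] at this
      exact castAdd_inj i i' (σ.injective this)))

noncomputable def stdR (σ : Perm (Fin (m + r))) : Perm (Fin r) :=
  Equiv.ofBijective
    (fun j => ((Aof σ)ᶜ.orderIsoOfFin (card_compl_eq _ (card_Aof σ))).symm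
      ⟨σ (Fin.natAdd m j), mem_Aof_compl σ j⟩)
    (Finite.injective_iff_bijective.mp (by
      intro j j' h
      have := congrArg
        (fun x => ((((Aof σ)ᶜ).orderIsoOfFin (card_compl_eq _ (card_Aof σ))) x : Fin (m + r))) h
      simp only [OrderIso.apply_symm_apply] at this
      exact natAdd_inj j j' (σ.injective this)))

lemma emb_stdL (σ : Perm (Fin (m + r))) (i : Fin m) :
    (Aof σ).orderEmbOfFin (card_Aof σ) (stdL σ i) = σ (Fin.castAdd r i) := by
  rw [← Finset.coe_orderIsoOfFin_apply]
  simp [stdL]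

lemma emb_stdR (σ : Perm (Fin (m + r))) (j : Fin r) :
    (Aof σ)ᶜ.orderEmbOfFin (card_compl_eq _ (card_Aof σ)) (stdR σ j) = σ (Fin.natAdd m j) := by
  rw [← Finset.coe_orderIsoOfFin_apply]
  simp [stdR]

lemma build_std (σ : Perm (Fin (m + r))) :
    buildPerm (Aof σ) (stdL σ) (stdR σ) = σ := by
  ext x
  induction x using Fin.addCases with
  | left i => rw [buildPerm_left _ (card_Aof σ), emb_stdL]
  | right j => rw [buildPerm_right _ (card_Aof σ), emb_stdR]

lemma orderEmbOfFin_congr {n t : ℕ} {A B : Finset (Fin n)} (h : A = B)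
    (hA : A.card = t) (hB : B.card = t) (x : Fin t) :
    A.orderEmbOfFin hA x = B.orderEmbOfFin hB x := by subst h; rfl

lemma Aof_build (A : Finset (Fin (m + r))) (hA : A.card = m)
    (τ : Perm (Fin m)) (ρ : Perm (Fin r)) : Aof (buildPerm A τ ρ) = A := by
  ext x
  simp only [Aof, Finset.mem_image, Finset.mem_univ, true_and]
  constructor
  · rintro ⟨i, rfl⟩
    rw [buildPerm_left _ hA]
    exact A.orderEmbOfFin_mem hA (τ i)
  · intro hx
    have : x ∈ Set.range (A.orderEmbOfFin hA) := by
      rw [Finset.range_orderEmbOfFin]; exact hx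
    obtain ⟨i, rfl⟩ := this
    exact ⟨τ.symm i, by rw [buildPerm_left _ hA, Equiv.apply_symm_apply]⟩

lemma stdL_build (A : Finset (Fin (m + r))) (hA : A.card = m)
    (τ : Perm (Fin m)) (ρ : Perm (Fin r)) : stdL (buildPerm A τ ρ) = τ := by
  ext i
  have h1 := emb_stdL (buildPerm A τ ρ) i
  rw [buildPerm_left _ hA,
    orderEmbOfFin_congr (Aof_build A hA τ ρ) (card_Aof _) hA] at h1
  exact congrArg Fin.val ((A.orderEmbOfFin hA).injective h1)

lemma stdR_build (A : Finset (Fin (m + r))) (hA : A.card = m)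
    (τ : Perm (Fin m)) (ρ : Perm (Fin r)) : stdR (buildPerm A τ ρ) = ρ := by
  ext j
  have h1 := emb_stdR (buildPerm A τ ρ) j
  rw [buildPerm_right _ hA,
    orderEmbOfFin_congr (congrArg compl (Aof_build A hA τ ρ)) (card_compl_eq _ (card_Aof _))
      (card_compl_eq _ hA)] at h1
  exact congrArg Fin.val ((Aᶜ.orderEmbOfFin (card_compl_eq _ hA)).injective h1)

lemma master_sum (W : Perm (Fin (m + r)) → ℝ) :
    ∑ σ : Perm (Fin (m + r)), W σ
      = ∑ A ∈ Finset.univ.powersetCard m, ∑ τ : Perm (Fin m), ∑ ρ : Perm (Fin r),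
          W (buildPerm A τ ρ) := by
  have h1 : ∀ A ∈ Finset.univ.powersetCard m,
      (∑ τ : Perm (Fin m), ∑ ρ : Perm (Fin r), W (buildPerm A τ ρ))
      = ∑ p ∈ (Finset.univ ×ˢ Finset.univ : Finset (Perm (Fin m) × Perm (Fin r))),
          W (buildPerm A p.1 p.2) := by
    intro A _; rw [Finset.sum_product]
  rw [Finset.sum_congr rfl h1, ← Finset.sum_product']
  refine Finset.sum_bij' (fun σ _ => (Aof σ, stdL σ, stdR σ))
    (fun x _ => buildPerm x.1 x.2.1 x.2.2) ?_ ?_ ?_ ?_ ?_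
  · intro σ _
    simp only [Finset.mem_product, Finset.mem_univ, and_true, true_and,
      Finset.mem_powersetCard_univ]
    exact card_Aof σ
  · intro x _; exact Finset.mem_univ _
  · intro σ _; exact build_std σ
  · intro x hx
    simp only [Finset.mem_product, Finset.mem_powersetCard_univ] at hx
    obtain ⟨hA, -⟩ := hx
    ext <;>
      simp [Aof_build _ hA, stdL_build _ hA, stdR_build _ hA]
  · intro σ _; rw [build_std]

lemma inversions_eq_sum {n : ℕ} (σ : Perm (Fin n)) :
    inversions σ = ∑ x : Fin n, ∑ y : Fin n, if x < y ∧ σ y < σ x then 1 else 0 := by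
  rw [inversions, Finset.card_filter, ← Finset.univ_product_univ, Finset.sum_product]

lemma image_orderEmbOfFin {n t : ℕ} (A : Finset (Fin n)) (h : A.card = t) :
    Finset.univ.image (A.orderEmbOfFin h) = A := by
  rw [← Finset.coe_inj, Finset.coe_image, Finset.coe_univ, Set.image_univ,
    Finset.range_orderEmbOfFin]

lemma sum_orderEmbOfFin {n t : ℕ} (A : Finset (Fin n)) (h : A.card = t) (f : Fin n → ℕ) :
    ∑ x ∈ A, f x = ∑ i : Fin t, f (A.orderEmbOfFin h i) := by
  conv_lhs => rw [← image_orderEmbOfFin A h]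
  rw [Finset.sum_image (fun i _ j _ hij => (A.orderEmbOfFin h).injective hij)]

lemma cross_eq (A : Finset (Fin (m + r))) (hA : A.card = m) :
    cross A = ∑ i : Fin m, ∑ j : Fin r,
      if Aᶜ.orderEmbOfFin (card_compl_eq A hA) j < A.orderEmbOfFin hA i then 1 else 0 := by
  rw [cross, sum_orderEmbOfFin A hA]
  exact Finset.sum_congr rfl fun i _ => sum_orderEmbOfFin Aᶜ (card_compl_eq A hA) _

lemma inversions_build (A : Finset (Fin (m + r))) (hA : A.card = m)
    (τ : Perm (Fin m)) (ρ : Perm (Fin r)) :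
    inversions (buildPerm A τ ρ) = inversions τ + inversions ρ + cross A := by
  have embAlt : ∀ x y : Fin m, A.orderEmbOfFin hA x < A.orderEmbOfFin hA y ↔ x < y :=
    fun x y => (A.orderEmbOfFin hA).lt_iff_lt
  have embClt : ∀ x y : Fin r, Aᶜ.orderEmbOfFin (card_compl_eq A hA) x <
      Aᶜ.orderEmbOfFin (card_compl_eq A hA) y ↔ x < y :=
    fun x y => (Aᶜ.orderEmbOfFin (card_compl_eq A hA)).lt_iff_lt
  have hcc : ∀ i i' : Fin m, Fin.castAdd r i < Fin.castAdd r i' ↔ i < i' := by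
    intro i i'; simp only [Fin.lt_def, Fin.coe_castAdd]
  have hnn : ∀ j j' : Fin r, Fin.natAdd m j < Fin.natAdd m j' ↔ j < j' := by
    intro j j'; simp only [Fin.lt_def, Fin.coe_natAdd]
    omega
  have hcn : ∀ (i : Fin m) (j : Fin r), Fin.castAdd r i < Fin.natAdd m j := by
    intro i j; have := i.isLt
    simp only [Fin.lt_def, Fin.coe_castAdd, Fin.coe_natAdd]; omega
  have hnc : ∀ (j : Fin r) (i : Fin m), ¬ Fin.natAdd m j < Fin.castAdd r i := by
    intro j i; have := i.isLt
    simp only [Fin.lt_def, Fin.coe_castAdd, Fin.coe_natAdd, not_lt]; omega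
  rw [inversions_eq_sum, ← Equiv.sum_comp finSumFinEquiv, Fintype.sum_sum_type]
  have inner : ∀ u : Fin m ⊕ Fin r,
      (∑ y : Fin (m + r), if finSumFinEquiv u < y ∧
          (buildPerm A τ ρ) y < (buildPerm A τ ρ) (finSumFinEquiv u) then 1 else 0)
      = ∑ v : Fin m ⊕ Fin r, (if finSumFinEquiv u < finSumFinEquiv v ∧
          (buildPerm A τ ρ) (finSumFinEquiv v) < (buildPerm A τ ρ) (finSumFinEquiv u)
          then 1 else 0) := by
    intro u; rw [← Equiv.sum_comp finSumFinEquiv]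
  rw [Finset.sum_congr rfl (fun u _ => inner _), Finset.sum_congr rfl (fun u _ => inner _)]
  simp only [Fintype.sum_sum_type, finSumFinEquiv_apply_left, finSumFinEquiv_apply_right,
    buildPerm_left _ hA, buildPerm_right _ hA]
  have T1 : (∑ i : Fin m, ∑ i' : Fin m, if Fin.castAdd r i < Fin.castAdd r i' ∧
      A.orderEmbOfFin hA (τ i') < A.orderEmbOfFin hA (τ i) then 1 else 0) = inversions τ := by
    rw [inversions_eq_sum]
    exact Finset.sum_congr rfl fun i _ => Finset.sum_congr rfl fun i' _ => by
      rw [if_congr (and_congr (hcc i i') (embAlt _ _)) rfl rfl]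
  have T4 : (∑ j : Fin r, ∑ j' : Fin r, if Fin.natAdd m j < Fin.natAdd m j' ∧
      Aᶜ.orderEmbOfFin (card_compl_eq A hA) (ρ j') <
        Aᶜ.orderEmbOfFin (card_compl_eq A hA) (ρ j) then 1 else 0) = inversions ρ := by
    rw [inversions_eq_sum]
    exact Finset.sum_congr rfl fun j _ => Finset.sum_congr rfl fun j' _ => by
      rw [if_congr (and_congr (hnn j j') (embClt _ _)) rfl rfl]
  have T2 : (∑ i : Fin m, ∑ j : Fin r, if Fin.castAdd r i < Fin.natAdd m j ∧
      Aᶜ.orderEmbOfFin (card_compl_eq A hA) (ρ j) < A.orderEmbOfFin hA (τ i) then 1 else 0)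
      = cross A := by
    calc (∑ i : Fin m, ∑ j : Fin r, if Fin.castAdd r i < Fin.natAdd m j ∧
          Aᶜ.orderEmbOfFin (card_compl_eq A hA) (ρ j) < A.orderEmbOfFin hA (τ i) then 1 else 0)
        = ∑ i : Fin m, ∑ j : Fin r,
            if Aᶜ.orderEmbOfFin (card_compl_eq A hA) (ρ j) < A.orderEmbOfFin hA (τ i)
            then 1 else 0 :=
          Finset.sum_congr rfl fun i _ => Finset.sum_congr rfl fun j _ => by
            rw [if_congr (and_iff_right (hcn i j)) rfl rfl]
      _ = ∑ i : Fin m, ∑ j : Fin r,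
            if Aᶜ.orderEmbOfFin (card_compl_eq A hA) j < A.orderEmbOfFin hA (τ i)
            then 1 else 0 :=
          Finset.sum_congr rfl fun i _ => Fintype.sum_equiv ρ _ _ (fun j => rfl)
      _ = ∑ i : Fin m, ∑ j : Fin r,
            if Aᶜ.orderEmbOfFin (card_compl_eq A hA) j < A.orderEmbOfFin hA i
            then 1 else 0 := Fintype.sum_equiv τ _ _ (fun i => rfl)
      _ = cross A := (cross_eq A hA).symm
  have T3 : (∑ j : Fin r, ∑ i : Fin m, if Fin.natAdd m j < Fin.castAdd r i ∧
      A.orderEmbOfFin hA (τ i) < Aᶜ.orderEmbOfFin (card_compl_eq A hA) (ρ j) then 1 else 0)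
      = 0 := by
    refine Finset.sum_eq_zero fun j _ => Finset.sum_eq_zero fun i _ => ?_
    rw [if_neg (fun h => hnc j i h.1)]
  rw [Finset.sum_add_distrib, Finset.sum_add_distrib, T1, T4, T2, T3]
  ring

lemma qint_pos {q : ℝ} (hq : 0 < q) {i : ℕ} (hi : 1 ≤ i) : 0 < qint q i := by
  rw [qint]
  apply Finset.sum_pos (fun j _ => pow_pos hq j)
  exact ⟨0, by simp; omega⟩

lemma qfact_pos {q : ℝ} (hq : 0 < q) (n : ℕ) : 0 < qfact q n := by
  rw [qfact]
  exact Finset.prod_pos fun i hi => qint_pos hq (Finset.mem_Icc.mp hi).1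

lemma inversions_one (t : ℕ) : inversions (1 : Perm (Fin t)) = 0 := by
  rw [inversions, Finset.card_eq_zero, Finset.filter_eq_empty_iff]
  rintro p - ⟨h1, h2⟩
  simp only [Perm.one_apply] at h2
  exact absurd h1 (not_lt.mpr h2.le)

noncomputable def Fsum (q : ℝ) (t : ℕ) : ℝ := ∑ σ : Perm (Fin t), q ^ inversions σ

noncomputable def gsum (q : ℝ) (m r : ℕ) : ℝ :=
  ∑ A ∈ (Finset.univ : Finset (Fin (m + r))).powersetCard m, q ^ cross A

lemma master_Fsum (q : ℝ) (m r : ℕ) : Fsum q (m + r) = gsum q m r * Fsum q m * Fsum q r := by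
  rw [Fsum, master_sum, gsum, Fsum, Fsum, Finset.sum_mul, Finset.sum_mul]
  refine Finset.sum_congr rfl fun A hA => ?_
  have hAc : A.card = m := Finset.mem_powersetCard_univ.mp hA
  rw [mul_assoc, Finset.sum_mul_sum]
  simp only [Finset.mul_sum]
  refine Finset.sum_congr rfl fun τ _ => ?_
  refine Finset.sum_congr rfl fun ρ _ => ?_
  rw [inversions_build A hAc]
  ring

lemma Fsum_zero (q : ℝ) : Fsum q 0 = 1 := by
  rw [Fsum]
  rw [Finset.sum_eq_single_of_mem 1 (Finset.mem_univ _)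
    (fun σ _ h => absurd (Subsingleton.elim σ 1) h)]
  simp [inversions_one]

lemma Fsum_one (q : ℝ) : Fsum q 1 = 1 := by
  rw [Fsum]
  rw [Finset.sum_eq_single_of_mem 1 (Finset.mem_univ _)
    (fun σ _ h => absurd (Subsingleton.elim σ 1) h)]
  simp [inversions_one]

lemma powersetCard_eq_image_compl (t : ℕ) :
    (Finset.univ : Finset (Fin (t + 1))).powersetCard t
      = Finset.univ.image (fun y : Fin (t + 1) => {y}ᶜ) := by
  ext A
  simp only [Finset.mem_powersetCard_univ, Finset.mem_image, Finset.mem_univ, true_and]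
  constructor
  · intro hA
    have hc : Aᶜ.card = 1 := by
      rw [Finset.card_compl, hA]; simp
    obtain ⟨y, hy⟩ := Finset.card_eq_one.mp hc
    exact ⟨y, by rw [← hy, compl_compl]⟩
  · rintro ⟨y, rfl⟩
    rw [Finset.card_compl, Finset.card_singleton]; simp

lemma cross_singleton_compl {t : ℕ} (y : Fin (t + 1)) :
    cross ({y}ᶜ : Finset (Fin (t + 1))) = t - y.val := by
  rw [cross, compl_compl]
  have h1 : ∀ x ∈ ({y}ᶜ : Finset (Fin (t + 1))),
      (∑ z ∈ ({y} : Finset (Fin (t+1))), if z < x then 1 else 0)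
        = if y < x then 1 else 0 := fun x _ => by
    rw [Finset.sum_singleton]
  rw [Finset.sum_congr rfl h1, ← Finset.card_filter]
  have h3 : ({y}ᶜ : Finset (Fin (t+1))).filter (fun x => y < x) = Finset.Ioi y := by
    ext z
    simp only [Finset.mem_filter, Finset.mem_compl, Finset.mem_singleton, Finset.mem_Ioi]
    exact ⟨fun h => h.2, fun h => ⟨fun hz => absurd h (by simp [hz]), h⟩⟩
  rw [h3, Fin.card_Ioi]
  omega

lemma gsum_one (q : ℝ) (t : ℕ) : gsum q t 1 = qint q (t + 1) := by
  rw [gsum, powersetCard_eq_image_compl,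
    Finset.sum_image (fun a _ b _ h => by
      have := congrArg compl h; simpa [compl_compl] using this)]
  have : ∀ y : Fin (t + 1), q ^ cross ({y}ᶜ : Finset (Fin (t+1))) = q ^ (t - y.val) :=
    fun y => by rw [cross_singleton_compl]
  rw [Finset.sum_congr rfl fun y _ => this y, qint]
  rw [Fin.sum_univ_eq_sum_range (fun i => q ^ (t - i)) (t+1)]
  rw [← Finset.sum_range_reflect]
  refine Finset.sum_congr rfl fun i hi => ?_
  rw [Finset.mem_range] at hi
  congr 1
  omega

lemma Fsum_eq_qfact (q : ℝ) (t : ℕ) : Fsum q t = qfact q t := by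
  induction t with
  | zero => rw [Fsum_zero, qfact]; simp
  | succ t ih =>
      rw [master_Fsum q t 1, gsum_one, Fsum_one, ih, mul_one]
      conv_rhs => rw [qfact, Finset.prod_Icc_succ_top (Nat.le_add_left 1 t)]
      rw [← qfact]
      ring

lemma qfact_add (q : ℝ) (m r : ℕ) : qfact q (m + r) = gsum q m r * qfact q m * qfact q r := by
  rw [← Fsum_eq_qfact, ← Fsum_eq_qfact, ← Fsum_eq_qfact, master_Fsum]

lemma perm_eq_one_of_consec {t : ℕ} (ρ : Perm (Fin t))
    (h : ∀ (x : ℕ) (hx : x + 1 < t), ρ ⟨x, by omega⟩ < ρ ⟨x + 1, hx⟩) : ρ = 1 := by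
  have aux : ∀ (c x : ℕ) (h1 : x + c + 1 < t), ρ ⟨x, by omega⟩ < ρ ⟨x + c + 1, h1⟩ := by
    intro c
    induction c with
    | zero => intro x h1; exact h x h1
    | succ c ih =>
        intro x h1
        have h2 : x + c + 1 < t := by omega
        have := h (x + c + 1) (by omega)
        have e : (⟨x + c + 1 + 1, by omega⟩ : Fin t) = ⟨x + (c + 1) + 1, h1⟩ := by
          apply Fin.ext; simp; omega
        rw [e] at this
        exact lt_trans (ih x h2) this
  have mono : StrictMono ρ := by
    intro x y hxy
    obtain ⟨c, hc⟩ : ∃ c, y.val = x.val + c + 1 := ⟨y.val - x.val - 1, by omega⟩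
    have h1 : x.val + c + 1 < t := by rw [← hc]; exact y.isLt
    have := aux c x.val h1
    have ex : (⟨x.val, by omega⟩ : Fin t) = x := by apply Fin.ext; rfl
    have ey : (⟨x.val + c + 1, h1⟩ : Fin t) = y := by apply Fin.ext; simp [hc]
    rwa [ex, ey] at this
  have key : ∀ x : Fin t, ((mono.orderIsoOfSurjective ρ ρ.surjective) x : ℕ) = x :=
    fun x => Fin.coe_orderIso_apply _ x
  refine Equiv.ext fun x => Fin.ext ?_
  simpa using key x

lemma perm_consec_of_eq_one {t : ℕ} (x : ℕ) (hx : x + 1 < t) :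
    (1 : Perm (Fin t)) ⟨x, by omega⟩ < (1 : Perm (Fin t)) ⟨x + 1, hx⟩ := by
  simp [Fin.lt_def]


set_option maxHeartbeats 1000000 in
lemma perm_recursion (q : ℝ) {m r : ℕ} (hm : 1 ≤ m) (hr : 1 ≤ r) (S S' : Finset ℕ)
    (hS : S = insert m S') (hS' : ∀ x ∈ S', 1 ≤ x ∧ x < m) :
    (∑ σ ∈ Finset.univ.filter (fun σ : Perm (Fin (m + r)) =>
        ∀ i : Fin (m + r - 1), (σ ⟨i.val + 1, by have := i.isLt; omega⟩
            < σ ⟨i.val, by have := i.isLt; omega⟩ ↔ i.val + 1 ∈ S)), q ^ inversions σ)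
    + (∑ σ ∈ Finset.univ.filter (fun σ : Perm (Fin (m + r)) =>
        ∀ i : Fin (m + r - 1), (σ ⟨i.val + 1, by have := i.isLt; omega⟩
            < σ ⟨i.val, by have := i.isLt; omega⟩ ↔ i.val + 1 ∈ S')), q ^ inversions σ)
    = gsum q m r * (∑ τ ∈ Finset.univ.filter (fun τ : Perm (Fin m) =>
        ∀ i : Fin (m - 1), (τ ⟨i.val + 1, by have := i.isLt; omega⟩
            < τ ⟨i.val, by have := i.isLt; omega⟩ ↔ i.val + 1 ∈ S')), q ^ inversions τ) := by
  have hSm : ∀ x : ℕ, x ∈ S ↔ (x = m ∨ x ∈ S') := by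
    intro x; rw [hS, Finset.mem_insert]
  have hmS' : m ∉ S' := fun h => absurd (hS' m h).2 (lt_irrefl m)
  rw [Finset.sum_filter, Finset.sum_filter, ← Finset.sum_add_distrib, master_sum]
  rw [gsum, Finset.sum_mul]
  refine Finset.sum_congr rfl fun A hAmem => ?_
  have hA : A.card = m := Finset.mem_powersetCard_univ.mp hAmem
  rw [Finset.mul_sum, Finset.sum_filter]
  refine Finset.sum_congr rfl fun τ _ => ?_
  -- pointwise facts about B := buildPerm A τ ρ
  have hBlow : ∀ (ρ : Perm (Fin r)) (x : ℕ) (hx : x < m) (hx2 : x < m + r),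
      buildPerm A τ ρ ⟨x, hx2⟩ = A.orderEmbOfFin hA (τ ⟨x, hx⟩) := by
    intro ρ x hx hx2
    have e : (⟨x, hx2⟩ : Fin (m + r)) = Fin.castAdd r ⟨x, hx⟩ := rfl
    rw [e, buildPerm_left _ hA]
  have hBhigh : ∀ (ρ : Perm (Fin r)) (x : ℕ) (hx : x < r) (v : ℕ) (hv : v = m + x)
      (hx2 : v < m + r),
      buildPerm A τ ρ ⟨v, hx2⟩ = Aᶜ.orderEmbOfFin (card_compl_eq A hA) (ρ ⟨x, hx⟩) := by
    intro ρ x hx v hv hx2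
    subst hv
    have e : (⟨m + x, hx2⟩ : Fin (m + r)) = Fin.natAdd m ⟨x, hx⟩ := rfl
    rw [e, buildPerm_right _ hA]
  have dlow : ∀ (ρ : Perm (Fin r)) (x : ℕ) (h1 : x + 1 < m) (p1 : x + 1 < m + r)
      (p2 : x < m + r),
      (buildPerm A τ ρ ⟨x + 1, p1⟩ < buildPerm A τ ρ ⟨x, p2⟩
        ↔ τ ⟨x + 1, h1⟩ < τ ⟨x, by omega⟩) := by
    intro ρ x h1 p1 p2
    rw [hBlow ρ (x + 1) h1, hBlow ρ x (by omega)]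
    exact (A.orderEmbOfFin hA).lt_iff_lt
  have dhigh : ∀ (ρ : Perm (Fin r)) (x : ℕ) (h1 : x + 1 < r) (v : ℕ) (hv : v = m + x)
      (p1 : v + 1 < m + r) (p2 : v < m + r),
      (buildPerm A τ ρ ⟨v + 1, p1⟩ < buildPerm A τ ρ ⟨v, p2⟩
        ↔ ρ ⟨x + 1, h1⟩ < ρ ⟨x, by omega⟩) := by
    intro ρ x h1 v hv p1 p2
    rw [hBhigh ρ (x + 1) h1 (v + 1) (by omega) p1, hBhigh ρ x (by omega) v hv p2]
    exact (Aᶜ.orderEmbOfFin (card_compl_eq A hA)).lt_iff_lt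
  -- the common implication
  have common : ∀ (ρ : Perm (Fin r)) (T : Finset ℕ)
      (hT1 : ∀ x : ℕ, x < m → (x ∈ T ↔ x ∈ S')) (hT2 : ∀ x : ℕ, m < x → x ∉ T),
      (∀ i : Fin (m + r - 1), (buildPerm A τ ρ ⟨i.val + 1, by have := i.isLt; omega⟩
          < buildPerm A τ ρ ⟨i.val, by have := i.isLt; omega⟩ ↔ i.val + 1 ∈ T)) →
      ((∀ i : Fin (m - 1), (τ ⟨i.val + 1, by have := i.isLt; omega⟩
          < τ ⟨i.val, by have := i.isLt; omega⟩ ↔ i.val + 1 ∈ S')) ∧ ρ = 1) := by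
    intro ρ T hT1 hT2 hcond
    constructor
    · intro i
      have hi := i.isLt
      have hc := hcond ⟨i.val, by omega⟩
      simp only at hc
      rw [dlow ρ i.val (by omega)] at hc
      rw [hc, hT1 (i.val + 1) (by omega)]
    · apply perm_eq_one_of_consec
      intro x hx
      have hc := hcond ⟨m + x, by omega⟩
      simp only at hc
      rw [dhigh ρ x hx (m + x) rfl] at hc
      have hnot : ¬ (ρ ⟨x + 1, hx⟩ < ρ ⟨x, by omega⟩) := by
        rw [hc]; exact hT2 (m + x + 1) (by omega)
      refine lt_of_le_of_ne (not_lt.mp hnot) (fun e => ?_)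
      have := ρ.injective e
      have := congrArg Fin.val this
      simp at this
  have mkeq : ∀ (a b : ℕ) (ha : a < m + r) (hb : b < m + r), a = b →
      (⟨a, ha⟩ : Fin (m + r)) = ⟨b, hb⟩ := by
    intro a b ha hb h; subst h; rfl
  have dcongr : ∀ (ρ : Perm (Fin r)) (a b a' b' : ℕ) (pa : a < m + r) (pb : b < m + r)
      (pa' : a' < m + r) (pb' : b' < m + r), a = a' → b = b' →
      ((buildPerm A τ ρ ⟨a, pa⟩ < buildPerm A τ ρ ⟨b, pb⟩)
        ↔ (buildPerm A τ ρ ⟨a', pa'⟩ < buildPerm A τ ρ ⟨b', pb'⟩)) := by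
    intro ρ a b a' b' pa pb pa' pb' h1 h2; subst h1; subst h2; rfl
  -- key pointwise identity, then sum over ρ
  have key : ∀ ρ : Perm (Fin r),
      ((if (∀ i : Fin (m + r - 1), (buildPerm A τ ρ ⟨i.val + 1, by have := i.isLt; omega⟩
          < buildPerm A τ ρ ⟨i.val, by have := i.isLt; omega⟩ ↔ i.val + 1 ∈ S))
        then q ^ inversions (buildPerm A τ ρ) else 0)
      + (if (∀ i : Fin (m + r - 1), (buildPerm A τ ρ ⟨i.val + 1, by have := i.isLt; omega⟩
          < buildPerm A τ ρ ⟨i.val, by have := i.isLt; omega⟩ ↔ i.val + 1 ∈ S'))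
        then q ^ inversions (buildPerm A τ ρ) else 0))
      = if ((∀ i : Fin (m - 1), (τ ⟨i.val + 1, by have := i.isLt; omega⟩
          < τ ⟨i.val, by have := i.isLt; omega⟩ ↔ i.val + 1 ∈ S')) ∧ ρ = 1)
        then q ^ (inversions τ + inversions ρ + cross A) else 0 := by
    intro ρ
    have hTS : ∀ x : ℕ, x < m → (x ∈ S ↔ x ∈ S') := by
      intro x hx
      rw [hSm]
      exact ⟨fun h => h.elim (fun e => absurd e (by omega)) id, fun h => Or.inr h⟩
    have hTS2 : ∀ x : ℕ, m < x → x ∉ S := by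
      intro x hx h
      rcases (hSm x).mp h with e | h'
      · omega
      · exact absurd (hS' x h').2 (by omega)
    have hT'1 : ∀ x : ℕ, x < m → (x ∈ S' ↔ x ∈ S') := fun _ _ => Iff.rfl
    have hT'2 : ∀ x : ℕ, m < x → x ∉ S' := fun x hx h => absurd (hS' x h).2 (by omega)
    by_cases hQ : (∀ i : Fin (m - 1), (τ ⟨i.val + 1, by have := i.isLt; omega⟩
        < τ ⟨i.val, by have := i.isLt; omega⟩ ↔ i.val + 1 ∈ S')) ∧ ρ = 1
    · rw [if_pos hQ, ← inversions_build A hA]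
      obtain ⟨hQ1, rfl⟩ := hQ
      by_cases hd : buildPerm A τ 1 ⟨m, by omega⟩ < buildPerm A τ 1 ⟨m - 1, by omega⟩
      · -- descent at m : exact descent set S holds, S' fails
        rw [if_pos, if_neg, add_zero]
        · intro hPS'
          have hc := hPS' ⟨m - 1, by omega⟩
          simp only at hc
          have hd' : buildPerm A τ 1 ⟨m - 1 + 1, by omega⟩ < buildPerm A τ 1 ⟨m - 1, by omega⟩ :=
            (dcongr 1 m (m - 1) (m - 1 + 1) (m - 1) (by omega) (by omega) (by omega) (by omega)
              (by omega) rfl).mp hd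
          have h2 : m - 1 + 1 ∈ S' := hc.mp hd'
          have e2 : m - 1 + 1 = m := by omega
          rw [e2] at h2
          exact hmS' h2
        · intro i
          have hi := i.isLt
          rcases lt_trichotomy (i.val + 1) m with hlt | heq | hgt
          · rw [dlow 1 i.val hlt]
            have h1 := hQ1 ⟨i.val, by omega⟩
            simp only at h1
            rw [h1, hTS (i.val + 1) hlt]
          · have hmem : i.val + 1 ∈ S := by rw [heq, hSm]; exact Or.inl rfl
            refine iff_of_true ?_ hmem
            exact (dcongr 1 m (m - 1) (i.val + 1) i.val (by omega) (by omega)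
              (by have := i.isLt; omega) (by have := i.isLt; omega)
              (by omega) (by omega)).mp hd
          · have hx : (i.val - m) + 1 < r := by omega
            refine iff_of_false (fun hlt2 => ?_) (hTS2 (i.val + 1) (by omega))
            have := (dcongr 1 (i.val + 1) i.val ((m + (i.val - m)) + 1) (m + (i.val - m))
              (by have := i.isLt; omega) (by have := i.isLt; omega)
              (by omega) (by omega) (by omega) (by omega)).mp hlt2
            rw [dhigh 1 (i.val - m) hx (m + (i.val - m)) rfl] at this
            simp [Fin.lt_def] at this
      · -- no descent at m : exact descent set S' holds, S fails
        rw [if_neg, if_pos, zero_add]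
        · intro i
          have hi := i.isLt
          rcases lt_trichotomy (i.val + 1) m with hlt | heq | hgt
          · rw [dlow 1 i.val hlt]
            have h1 := hQ1 ⟨i.val, by omega⟩
            simp only at h1
            rw [h1]
          · refine iff_of_false (fun hlt2 => ?_) (fun h => by have := (hS' _ h).2; omega)
            exact hd ((dcongr 1 (i.val + 1) i.val m (m - 1)
              (by have := i.isLt; omega) (by have := i.isLt; omega)
              (by omega) (by omega) (by omega) (by omega)).mp hlt2)
          · have hx : (i.val - m) + 1 < r := by omega
            refine iff_of_false (fun hlt2 => ?_) (hT'2 (i.val + 1) (by omega))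
            have := (dcongr 1 (i.val + 1) i.val ((m + (i.val - m)) + 1) (m + (i.val - m))
              (by have := i.isLt; omega) (by have := i.isLt; omega)
              (by omega) (by omega) (by omega) (by omega)).mp hlt2
            rw [dhigh 1 (i.val - m) hx (m + (i.val - m)) rfl] at this
            simp [Fin.lt_def] at this
        · intro hPS
          have hc := hPS ⟨m - 1, by omega⟩
          simp only at hc
          have hmem : m - 1 + 1 ∈ S := by
            have e2 : (m - 1 + 1) = m := by omega
            rw [e2, hSm]; exact Or.inl rfl
          have := hc.mpr hmem
          exact hd ((dcongr 1 (m - 1 + 1) (m - 1) m (m - 1) (by omega) (by omega)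
            (by omega) (by omega) (by omega) rfl).mp this)
    · -- Q fails : both indicators vanish
      rw [if_neg hQ, if_neg, if_neg, add_zero]
      · exact fun h => hQ (common ρ S' hT'1 hT'2 h)
      · exact fun h => hQ (common ρ S hTS hTS2 h)
  rw [Finset.sum_congr rfl (fun ρ _ => key ρ)]
  -- sum over ρ : only ρ = 1 contributes
  rw [Finset.sum_eq_single_of_mem 1 (Finset.mem_univ _) (fun ρ _ hne => by
    rw [if_neg (fun hc => hne hc.2)])]
  by_cases hQ1 : (∀ i : Fin (m - 1), (τ ⟨i.val + 1, by have := i.isLt; omega⟩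
      < τ ⟨i.val, by have := i.isLt; omega⟩ ↔ i.val + 1 ∈ S'))
  · rw [if_pos ⟨hQ1, rfl⟩, if_pos hQ1, inversions_one, add_zero, pow_add, mul_comm]
  · rw [if_neg (fun hc => hQ1 hc.1), if_neg hQ1]

lemma qfact_zero (q : ℝ) : qfact q 0 = 1 := by rw [qfact]; simp

lemma s_chain (s : ℕ → ℕ) (k : ℕ) (hmono : ∀ i ≤ k, s i < s (i + 1)) :
    ∀ a b : ℕ, a < b → b ≤ k + 1 → s a < s b := by
  intro a b hab hbk
  induction b with
  | zero => omega
  | succ b ihb =>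
      rcases Nat.lt_or_ge a b with h | h
      · exact lt_trans (ihb h (by omega)) (hmono b (by omega))
      · have : a = b := by omega
        subst this; exact hmono a (by omega)

/-- Under the Mallows measure `P_q(σ) = q^{inv σ}/[n]_q!` on `S_n`, the probability that the
descent set equals `S = {s 1 < … < s k}` is `det(1/[s_{j+1} - s_i]_q!)_{i,j=0}^k`, with
`s 0 = 0`, `s (k+1) = n`, and `1/[m]_q! = 0` for `m < 0` (the `if`-clause). -/
theorem mallows_descent_set_det (q : ℝ) (hq : 0 < q) (n k : ℕ) (S : Finset ℕ) (s : ℕ → ℕ)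
    (hs0 : s 0 = 0) (hsn : s (k + 1) = n)
    (hmono : ∀ i ≤ k, s i < s (i + 1))
    (hS : S = (Finset.Icc 1 k).image s) :
    (∑ σ ∈ Finset.univ.filter (fun σ : Equiv.Perm (Fin n) =>
        ∀ i : Fin (n - 1), (σ ⟨i.val + 1, by have := i.isLt; omega⟩
            < σ ⟨i.val, by have := i.isLt; omega⟩ ↔ i.val + 1 ∈ S)), q ^ inversions σ)
        / qfact q n
      = Matrix.det (Matrix.of fun i j : Fin (k + 1) =>
          if s i.val ≤ s (j.val + 1) then 1 / qfact q (s (j.val + 1) - s i.val) else 0) := by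
  induction k generalizing n S s with
  | zero =>
    have hSe : S = ∅ := by rw [hS, Finset.Icc_eq_empty (by omega), Finset.image_empty]
    have hfilter : (Finset.univ.filter (fun σ : Perm (Fin n) =>
        ∀ i : Fin (n - 1), (σ ⟨i.val + 1, by have := i.isLt; omega⟩
            < σ ⟨i.val, by have := i.isLt; omega⟩ ↔ i.val + 1 ∈ S))) = {1} := by
      ext σ
      simp only [Finset.mem_filter, Finset.mem_univ, true_and, Finset.mem_singleton, hSe,
        Finset.notMem_empty, iff_false]
      constructor
      · intro h
        apply perm_eq_one_of_consec
        intro x hx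
        have h2 := h ⟨x, by omega⟩
        simp only at h2
        have h3 : ¬ (σ ⟨x + 1, by omega⟩ < σ ⟨x, by omega⟩) := h2
        refine lt_of_le_of_ne (not_lt.mp h3) (fun e => ?_)
        have := congrArg Fin.val (σ.injective e)
        simp at this
      · rintro rfl i
        simp [Fin.lt_def]
    rw [hfilter, Finset.sum_singleton, inversions_one, pow_zero, Matrix.det_fin_one,
      Matrix.of_apply]
    simp only [Fin.isValue, Fin.val_zero, hs0, hsn, Nat.zero_le, if_true, Nat.sub_zero]
  | succ k' ih =>
    -- basic inequalities
    have chain := s_chain s (k' + 1) hmono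
    have hm : 1 ≤ s (k' + 1) := by
      have := chain 0 (k' + 1) (by omega) (by omega); omega
    have hmn : s (k' + 1) < n := by
      have := chain (k' + 1) (k' + 1 + 1) (by omega) (by omega); omega
    obtain ⟨r, rfl⟩ : ∃ r, n = s (k' + 1) + r := ⟨n - s (k' + 1), by omega⟩
    have hr : 1 ≤ r := by omega
    -- the smaller descent sets
    have hSins : S = insert (s (k' + 1)) ((Finset.Icc 1 k').image s) := by
      rw [hS, ← Finset.insert_Icc_right_eq_Icc_add_one (by omega), Finset.image_insert]
    have hS'b : ∀ x ∈ (Finset.Icc 1 k').image s, 1 ≤ x ∧ x < s (k' + 1) := by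
      intro x hx
      rw [Finset.mem_image] at hx
      obtain ⟨i, hi, rfl⟩ := hx
      rw [Finset.mem_Icc] at hi
      constructor
      · have := chain 0 i (by omega) (by omega); omega
      · exact chain i (k' + 1) (by omega) (by omega)
    -- modified sequence with new top value
    obtain ⟨s'', hs''⟩ : ∃ s'' : ℕ → ℕ,
        s'' = fun t => if t = k' + 1 then s (k' + 1) + r else s t := ⟨_, rfl⟩
    have hs''eval : ∀ t, s'' t = if t = k' + 1 then s (k' + 1) + r else s t :=
      fun t => by rw [hs'']
    have hs''low : ∀ t, t ≠ k' + 1 → s'' t = s t := by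
      intro t ht; rw [hs''eval, if_neg ht]
    have hs''top : s'' (k' + 1) = s (k' + 1) + r := by rw [hs''eval, if_pos rfl]
    -- the two inductive hypotheses
    have ih1 := ih (s (k' + 1)) ((Finset.Icc 1 k').image s) s hs0 rfl
      (fun i hi => hmono i (by omega)) rfl
    have ih2 := ih (s (k' + 1) + r) ((Finset.Icc 1 k').image s) s''
      (by rw [hs''low 0 (by omega)]; exact hs0) hs''top
      (by
        intro i hi
        rcases Nat.eq_or_lt_of_le hi with he | hlt
        · rw [hs''low i (by omega), he, hs''top]
          have := chain k' (k' + 1) (by omega) (by omega)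
          omega
        · rw [hs''low i (by omega), hs''low (i + 1) (by omega)]
          exact hmono i (by omega))
      (by
        refine Finset.image_congr ?_
        intro x hx
        rw [Finset.mem_coe, Finset.mem_Icc] at hx
        exact (hs''low x (by omega)).symm)
    -- the permutation recursion
    have E1 := perm_recursion q hm hr S ((Finset.Icc 1 k').image s) hSins hS'b
    -- name the two sub-determinants
    set D1 := (Matrix.of fun i j : Fin (k' + 1) =>
      if s i.val ≤ s (j.val + 1) then 1 / qfact q (s (j.val + 1) - s i.val) else 0).det
      with hD1def
    set D2 := (Matrix.of fun i j : Fin (k' + 1) =>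
      if s'' i.val ≤ s'' (j.val + 1) then 1 / qfact q (s'' (j.val + 1) - s'' i.val) else 0).det
      with hD2def
    have hqm := (qfact_pos hq (s (k' + 1))).ne'
    have hqr := (qfact_pos hq r).ne'
    have hqn := (qfact_pos hq (s (k' + 1) + r)).ne'
    have E2 := (div_eq_iff hqm).mp ih1
    have E3 := (div_eq_iff hqn).mp ih2
    have E5 := qfact_add q (s (k' + 1)) r
    -- determinant expansion along the last row
    set D0 := (Matrix.of fun i j : Fin (k' + 1 + 1) =>
      if s i.val ≤ s (j.val + 1) then 1 / qfact q (s (j.val + 1) - s i.val) else 0).det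
      with hD0def
    have hexp : D0 = D1 * (1 / qfact q r) - D2 := by
      rw [hD0def, Matrix.det_succ_row _ (Fin.last (k' + 1)), Fin.sum_univ_castSucc,
        Fin.sum_univ_castSucc]
      have hzero : (∑ j : Fin k', (-1 : ℝ) ^ ((Fin.last (k' + 1)).val
            + ((j.castSucc).castSucc).val)
          * (Matrix.of fun i j : Fin (k' + 1 + 1) =>
              if s i.val ≤ s (j.val + 1) then 1 / qfact q (s (j.val + 1) - s i.val) else 0)
              (Fin.last (k' + 1)) ((j.castSucc).castSucc)
          * ((Matrix.of fun i j : Fin (k' + 1 + 1) =>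
              if s i.val ≤ s (j.val + 1) then 1 / qfact q (s (j.val + 1) - s i.val) else 0).submatrix
              (Fin.last (k' + 1)).succAbove ((j.castSucc).castSucc).succAbove).det) = 0 := by
        refine Finset.sum_eq_zero fun j _ => ?_
        have hj := j.isLt
        have hlt : ¬ (s (k' + 1) ≤ s (j.val + 1)) :=
          not_le.mpr (chain (j.val + 1) (k' + 1) (by omega) (by omega))
        rw [Matrix.of_apply]
        simp only [Fin.val_last, Fin.coe_castSucc]
        rw [if_neg hlt, mul_zero, zero_mul]
      rw [hzero, zero_add]
      -- middle term
      have hmid : ((Fin.last k').castSucc : Fin (k' + 1 + 1)).val = k' := by simp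
      have hlastv : (Fin.last (k' + 1)).val = k' + 1 := rfl
      have hentry1 : (Matrix.of fun i j : Fin (k' + 1 + 1) =>
          if s i.val ≤ s (j.val + 1) then 1 / qfact q (s (j.val + 1) - s i.val) else 0)
          (Fin.last (k' + 1)) ((Fin.last k').castSucc) = 1 := by
        rw [Matrix.of_apply]
        simp only [Fin.val_last, Fin.coe_castSucc, hmid]
        rw [if_pos le_rfl, Nat.sub_self, qfact_zero, div_one]
      have hentry2 : (Matrix.of fun i j : Fin (k' + 1 + 1) =>
          if s i.val ≤ s (j.val + 1) then 1 / qfact q (s (j.val + 1) - s i.val) else 0)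
          (Fin.last (k' + 1)) (Fin.last (k' + 1)) = 1 / qfact q r := by
        rw [Matrix.of_apply]
        simp only [Fin.val_last]
        rw [if_pos (by omega), show s (k' + 1 + 1) - s (k' + 1) = r from by omega]
      have hminor2 : ((Matrix.of fun i j : Fin (k' + 1 + 1) =>
          if s i.val ≤ s (j.val + 1) then 1 / qfact q (s (j.val + 1) - s i.val) else 0).submatrix
          (Fin.last (k' + 1)).succAbove ((Fin.last k').castSucc).succAbove).det = D2 := by
        rw [hD2def]
        congr 1
        ext i j
        rw [Matrix.submatrix_apply, Fin.succAbove_last_apply, Matrix.of_apply, Matrix.of_apply]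
        rcases Nat.lt_or_ge j.val k' with hj | hj
        · rw [Fin.succAbove_of_castSucc_lt _ _ (by
            simp only [Fin.lt_def, Fin.coe_castSucc, Fin.val_last]; omega)]
          simp only [Fin.coe_castSucc]
          rw [hs''low i.val (by have := i.isLt; omega), hs''low (j.val + 1) (by omega)]
        · have hjv : j.val = k' := by have := j.isLt; omega
          rw [Fin.succAbove_of_le_castSucc _ _ (by
            simp only [Fin.le_def, Fin.coe_castSucc, Fin.val_last]; omega)]
          simp only [Fin.coe_castSucc, Fin.val_succ]
          rw [hjv, hs''low i.val (by have := i.isLt; omega), hs''top,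
            show s (k' + 1 + 1) = s (k' + 1) + r from hsn]
      have hminor1 : ((Matrix.of fun i j : Fin (k' + 1 + 1) =>
          if s i.val ≤ s (j.val + 1) then 1 / qfact q (s (j.val + 1) - s i.val) else 0).submatrix
          (Fin.last (k' + 1)).succAbove (Fin.last (k' + 1)).succAbove).det = D1 := by
        rw [hD1def]
        congr 1
        ext i j
        rw [Matrix.submatrix_apply, Fin.succAbove_last_apply, Fin.succAbove_last_apply,
          Matrix.of_apply, Matrix.of_apply]
        simp only [Fin.coe_castSucc]
      rw [hentry1, hentry2, hminor1, hminor2]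
      simp only [Fin.val_last, hmid]
      rw [show (-1 : ℝ) ^ (k' + 1 + k') = -1 from Odd.neg_one_pow ⟨k', by ring⟩,
        show (-1 : ℝ) ^ (k' + 1 + (k' + 1)) = 1 from Even.neg_one_pow ⟨k' + 1, by ring⟩]
      ring
    have hdet : D0 * qfact q r = D1 - D2 * qfact q r := by
      rw [hexp]
      field_simp
    rw [div_eq_iff hqn]
    linear_combination E1 + gsum q (s (k' + 1)) r * E2 - E3 - (D2 + D0) * E5
      - gsum q (s (k' + 1)) r * qfact q (s (k' + 1)) * hdet
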